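/- arXiv:0910.0747 — 2 statements merged into one kernel-verified Lean document; each statement's English description precedes it below -/
import Mathlib

section
/- (CR 2) Reducibility is preserved by one-step reduction: if Red M A and M → M', then Red M' A. -/
inductive Ty : Type
  | iota : Ty
  | arr : Ty → Ty → Ty

inductive Tm : Type
  | var : ℕ → Tm
  | const : Tm
  | app : Tm → Tm → Tm
  | abs : Ty → Tm → Tm

def liftRen (ρ : ℕ → ℕ) : ℕ → ℕ
  | 0 => 0
  | n + 1 => ρ n + 1

def rename (ρ : ℕ → ℕ) : Tm → Tm
  | Tm.var n => Tm.var (ρ n)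
  | Tm.const => Tm.const
  | Tm.app m n => Tm.app (rename ρ m) (rename ρ n)
  | Tm.abs a r => Tm.abs a (rename (liftRen ρ) r)

def liftSub (σ : ℕ → Tm) : ℕ → Tm
  | 0 => Tm.var 0
  | n + 1 => rename Nat.succ (σ n)

/-- Simultaneous capture-avoiding substitution. -/
def subst (σ : ℕ → Tm) : Tm → Tm
  | Tm.var n => σ n
  | Tm.const => Tm.const
  | Tm.app m n => Tm.app (subst σ m) (subst σ n)
  | Tm.abs a r => Tm.abs a (subst (liftSub σ) r)

/-- `subst0 s t` is `t[0 := s]`. -/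
def subst0 (s : Tm) (t : Tm) : Tm :=
  subst (fun n => match n with | 0 => s | Nat.succ k => Tm.var k) t

inductive Typed : List Ty → Tm → Ty → Prop
  | var {Γ : List Ty} {n : ℕ} {a : Ty} :
      Γ[n]? = some a → Typed Γ (Tm.var n) a
  | const {Γ : List Ty} {a : Ty} : Typed Γ Tm.const a
  | app {Γ : List Ty} {m n : Tm} {a b : Ty} :
      Typed Γ m (Ty.arr a b) → Typed Γ n a → Typed Γ (Tm.app m n) b
  | abs {Γ : List Ty} {r : Tm} {a b : Ty} :
      Typed (a :: Γ) r b → Typed Γ (Tm.abs a r) (Ty.arr a b)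

/-- One-step (β) reduction. -/
inductive Step : Tm → Tm → Prop
  | beta {a : Ty} {r m : Tm} : Step (Tm.app (Tm.abs a r) m) (subst0 m r)
  | appl {m m' n : Tm} : Step m m' → Step (Tm.app m n) (Tm.app m' n)
  | appr {m n n' : Tm} : Step n n' → Step (Tm.app m n) (Tm.app m n')
  | abs {a : Ty} {r r' : Tm} : Step r r' → Step (Tm.abs a r) (Tm.abs a r')

/-- Strong normalization. -/
inductive SN : Tm → Prop
  | intro {M : Tm} : (∀ M', Step M M' → SN M') → SN M

/-- Tait-style reducibility, by recursion on the type. -/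
def Red : Tm → Ty → Prop
  | M, Ty.iota => Typed [] M Ty.iota ∧ SN M
  | M, Ty.arr a b => Typed [] M (Ty.arr a b) ∧ ∀ U, Red U a → Red (Tm.app M U) b

theorem typed_rename {Γ Δ : List Ty} {t : Tm} {A : Ty} {ρ : ℕ → ℕ}
    (h : Typed Γ t A) (hρ : ∀ n a, Γ[n]? = some a → Δ[ρ n]? = some a) :
    Typed Δ (rename ρ t) A := by
  induction h generalizing Δ ρ with
  | var hget => exact Typed.var (hρ _ _ hget)
  | const => exact Typed.const
  | app _ _ ih1 ih2 => exact Typed.app (ih1 hρ) (ih2 hρ)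
  | @abs Γ r a b _ ih =>
    refine Typed.abs (ih ?_)
    intro n c hn
    cases n with
    | zero => exact hn
    | succ k => exact hρ k c hn

theorem typed_subst {Γ Δ : List Ty} {t : Tm} {A : Ty} {σ : ℕ → Tm}
    (h : Typed Γ t A) (hσ : ∀ n a, Γ[n]? = some a → Typed Δ (σ n) a) :
    Typed Δ (subst σ t) A := by
  induction h generalizing Δ σ with
  | var hget => exact hσ _ _ hget
  | const => exact Typed.const
  | app _ _ ih1 ih2 => exact Typed.app (ih1 hσ) (ih2 hσ)
  | @abs Γ r a b _ ih =>
    refine Typed.abs (ih ?_)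
    intro n c hn
    cases n with
    | zero => exact Typed.var hn
    | succ k =>
      exact typed_rename (hσ k c hn) (fun n a h => h)

theorem typed_subst0 {Γ : List Ty} {r m : Tm} {a b : Ty}
    (hr : Typed (a :: Γ) r b) (hm : Typed Γ m a) : Typed Γ (subst0 m r) b := by
  refine typed_subst hr ?_
  intro n c hn
  cases n with
  | zero => cases hn; exact hm
  | succ k => exact Typed.var hn

theorem preservation {Γ : List Ty} {t t' : Tm} {A : Ty}
    (h : Typed Γ t A) (hs : Step t t') : Typed Γ t' A := by
  induction hs generalizing Γ A with
  | beta =>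
    cases h with
    | app h1 h2 => cases h1 with
      | abs hr => exact typed_subst0 hr h2
  | appl _ ih => cases h with | app h1 h2 => exact Typed.app (ih h1) h2
  | appr _ ih => cases h with | app h1 h2 => exact Typed.app h1 (ih h2)
  | abs _ ih => cases h with | abs hr => exact Typed.abs (ih hr)

theorem cr2 {M M' : Tm} {A : Ty} (h : Red M A) (hs : Step M M') : Red M' A := by
  induction A generalizing M M' with
  | iota =>
    obtain ⟨ht, hsn⟩ := h
    refine ⟨preservation ht hs, ?_⟩
    cases hsn with
    | intro f => exact f _ hs
  | arr a b iha ihb =>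
    obtain ⟨ht, hred⟩ := h
    exact ⟨preservation ht hs, fun U hU => ihb (hred U hU) (Step.appl hs)⟩
end

section
/- (CR 3) A neutral, well-typed term all of whose one-step reducts are reducible is itself reducible: if M is neutral, [] ⊢ M : A, and Red M' A for every M' with M → M', then Red M A. -/
/-- A term is neutral if it is not an abstraction. -/
def Neutral (M : Tm) : Prop := ∀ (a : Ty) (r : Tm), M ≠ Tm.abs a r

lemma rename_typed {Γ : List Ty} {t : Tm} {a : Ty} (h : Typed Γ t a) :
    ∀ {Δ : List Ty} {ρ : ℕ → ℕ},
      (∀ n b, Γ[n]? = some b → Δ[ρ n]? = some b) →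
      Typed Δ (rename ρ t) a := by
  induction h with
  | var hv => intro Δ ρ hρ; exact Typed.var (hρ _ _ hv)
  | const => intro Δ ρ hρ; exact Typed.const
  | app _ _ ih1 ih2 => intro Δ ρ hρ; exact Typed.app (ih1 hρ) (ih2 hρ)
  | @abs Γ r a b _ ih =>
    intro Δ ρ hρ
    refine Typed.abs (ih ?_)
    intro n c hc
    cases n with
    | zero => exact hc
    | succ k => exact hρ k c hc

lemma subst_typed {Γ : List Ty} {t : Tm} {a : Ty} (h : Typed Γ t a) :
    ∀ {Δ : List Ty} {σ : ℕ → Tm},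
      (∀ n b, Γ[n]? = some b → Typed Δ (σ n) b) →
      Typed Δ (subst σ t) a := by
  induction h with
  | var hv => intro Δ σ hσ; exact hσ _ _ hv
  | const => intro Δ σ hσ; exact Typed.const
  | app _ _ ih1 ih2 => intro Δ σ hσ; exact Typed.app (ih1 hσ) (ih2 hσ)
  | @abs Γ r a b _ ih =>
    intro Δ σ hσ
    refine Typed.abs (ih ?_)
    intro n c hc
    cases n with
    | zero => exact Typed.var hc
    | succ k =>
      exact rename_typed (hσ k c hc) (fun n b hb => hb)

lemma preservation_s15 {M M' : Tm} (hs : Step M M') :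
    ∀ {Γ : List Ty} {a : Ty}, Typed Γ M a → Typed Γ M' a := by
  induction hs with
  | @beta a r m =>
    intro Γ b ht
    rcases ht with _ | _ | ⟨hf, hm⟩
    rcases hf with _ | _ | _ | hr
    refine subst_typed hr ?_
    intro n c hc
    cases n with
    | zero => cases hc; exact hm
    | succ k => exact Typed.var hc
  | appl _ ih =>
    intro Γ b ht
    rcases ht with _ | _ | ⟨hf, hm⟩
    exact Typed.app (ih hf) hm
  | appr _ ih =>
    intro Γ b ht
    rcases ht with _ | _ | ⟨hf, hm⟩
    exact Typed.app hf (ih hm)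
  | abs _ ih =>
    intro Γ b ht
    rcases ht with _ | _ | _ | hr
    exact Typed.abs (ih hr)

lemma sn_app_left : ∀ {t : Tm}, SN t → ∀ {M N : Tm}, t = Tm.app M N → SN M := by
  intro t h
  induction h with
  | @intro t _ ih =>
    rintro M N rfl
    exact SN.intro fun M' hM' => ih _ (Step.appl hM') rfl

lemma red_typed : ∀ {M : Tm} {a : Ty}, Red M a → Typed [] M a := by
  intro M a
  cases a <;> exact fun h => h.1

lemma cr_all : ∀ a : Ty,
    (∀ {M : Tm}, Red M a → SN M) ∧
    (∀ {M M' : Tm}, Red M a → Step M M' → Red M' a) ∧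
    (∀ {M : Tm}, Neutral M → Typed [] M a → (∀ M', Step M M' → Red M' a) → Red M a) := by
  intro a
  induction a with
  | iota =>
    refine ⟨fun h => h.2, ?_, ?_⟩
    · intro M M' hr hs
      refine ⟨preservation_s15 hs hr.1, ?_⟩
      cases hr.2 with
      | intro f => exact f _ hs
    · intro M hn ht h
      exact ⟨ht, SN.intro fun M' h' => (h M' h').2⟩
  | arr a b iha ihb =>
    obtain ⟨cr1a, cr2a, cr3a⟩ := iha
    obtain ⟨cr1b, cr2b, cr3b⟩ := ihb
    refine ⟨?_, ?_, ?_⟩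
    · intro M hr
      have hconst : Red Tm.const a := by
        refine cr3a (fun a r h => Tm.noConfusion h) Typed.const ?_
        intro M' hs
        cases hs
      exact sn_app_left (cr1b (hr.2 Tm.const hconst)) rfl
    · intro M M' hr hs
      exact ⟨preservation_s15 hs hr.1, fun U hU => cr2b (hr.2 U hU) (Step.appl hs)⟩
    · intro M hn ht h
      refine ⟨ht, ?_⟩
      intro U hU
      have key : ∀ U : Tm, SN U → Red U a → Red (Tm.app M U) b := by
        intro U hSN
        induction hSN with
        | @intro U _ ih =>
          intro hU
          refine cr3b (fun a r h => Tm.noConfusion h)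
            (Typed.app ht (red_typed hU)) ?_
          intro M' hs
          cases hs with
          | beta => exact absurd rfl (hn _ _)
          | appl hM => exact (h _ hM).2 U hU
          | appr hU' => exact ih _ hU' (cr2a hU hU')
      exact key U (cr1a hU) hU

theorem cr3 {M : Tm} {A : Ty} (hn : Neutral M) (ht : Typed [] M A)
    (h : ∀ M', Step M M' → Red M' A) : Red M A :=
  (cr_all A).2.2 hn ht h
end
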